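/- Let c ∈ ℂ with Re(c) > 0 and Im(c) > 0, and write θ := arg(c) ∈ (0, π/2). Then for every z ∈ ℂ, inf{‖H_c f − z f‖ : f ∈ 𝒮(ℝ), ‖f‖ = 1} = inf{‖H_c f − e^{iθ} \overline{z} f‖ : f ∈ 𝒮(ℝ), ‖f‖ = 1}; equivalently, the resolvent norm of H_c (and hence each ε-pseudospectrum of H_c) is symmetric with respect to reflection in the axis c^{1/2}·ℝ. -/

import Mathlib

open MeasureTheory Complex

/-- The action `f ↦ H_c f - z f` of the shifted complex harmonic oscillator. -/
noncomputable def oscShifted (c z : ℂ) (f : ℝ → ℂ) : ℝ → ℂ :=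
  fun x => -(deriv (deriv f) x) + c * (x : ℂ) ^ 2 * f x - z * f x

open SchwartzMap
open scoped FourierTransform Real

/-! ### Auxiliary constructions and lemmas -/

/-- Complex conjugation of a Schwartz function. -/
noncomputable def conjS (f : SchwartzMap ℝ ℂ) : SchwartzMap ℝ ℂ where
  toFun := fun x => (starRingEnd ℂ) (f x)
  smooth' := by
    have : (fun x => (starRingEnd ℂ) (f x)) = ⇑Complex.conjLIE ∘ ⇑f := rfl
    rw [this]
    exact (Complex.conjLIE.toContinuousLinearEquiv.toContinuousLinearMap.contDiff).comp
      (f.smooth ⊤)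
  decay' := by
    intro k n
    obtain ⟨C, hC⟩ := f.decay' k n
    refine ⟨C, fun x => ?_⟩
    have h : ‖iteratedFDeriv ℝ n (fun x => (starRingEnd ℂ) (f x)) x‖
        = ‖iteratedFDeriv ℝ n (⇑f) x‖ :=
      Complex.conjLIE.norm_iteratedFDeriv_comp_left (⇑f) x n
    rw [h]; exact hC x

@[simp] lemma conjS_apply (f : SchwartzMap ℝ ℂ) (x : ℝ) :
    conjS f x = (starRingEnd ℂ) (f x) := rfl

lemma integrable_conj {g : ℝ → ℂ} (hg : Integrable g) :
    Integrable (fun ξ => (starRingEnd ℂ) (g ξ)) :=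
  hg.norm.mono' (Complex.continuous_conj.comp_aestronglyMeasurable hg.1)
    (Filter.Eventually.of_forall fun x => by simp)

lemma innerl_flip : (innerₗ ℝ).flip = innerₗ ℝ := by
  ext x y
  simp [real_inner_comm]

lemma fourier_conj (w : ℝ → ℂ) (x : ℝ) :
    𝓕 (fun ξ => (starRingEnd ℂ) (w ξ)) x = (starRingEnd ℂ) (𝓕⁻ w x) := by
  rw [Real.fourier_real_eq_integral_exp_smul, Real.fourierInv_eq',
    ← integral_conj]
  congr 1
  funext v
  simp only [smul_eq_mul, map_mul, ← Complex.exp_conj, map_mul, Complex.conj_I,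
    Complex.conj_ofReal, RCLike.inner_apply, conj_trivial]
  push_cast
  ring_nf

/-- Plancherel's theorem for nice functions. -/
lemma plancherel_aux {h : ℝ → ℂ} (hc : Continuous h) (hi : Integrable h)
    (hFi : Integrable (𝓕 h)) :
    (∫ ξ : ℝ, ‖𝓕 h ξ‖ ^ 2) = ∫ x : ℝ, ‖h x‖ ^ 2 := by
  have hg : Integrable (fun ξ => (starRingEnd ℂ) (𝓕 h ξ)) := integrable_conj hFi
  have key := VectorFourier.integral_fourierIntegral_smul_eq_flip (L := innerₗ ℝ)
    (F := ℂ) (ν := (volume : Measure ℝ)) Real.continuous_fourierChar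
    (by simpa [mul_comm] using (continuous_mul : Continuous fun p : ℝ × ℝ => p.1 * p.2)) hi hg
  rw [innerl_flip] at key
  have keyr : (∫ ξ : ℝ, 𝓕 h ξ * (starRingEnd ℂ) (𝓕 h ξ))
      = ∫ x : ℝ, h x * (starRingEnd ℂ) (h x) := by
    calc (∫ ξ : ℝ, 𝓕 h ξ * (starRingEnd ℂ) (𝓕 h ξ))
        = ∫ x : ℝ, h x • 𝓕 (fun ξ => (starRingEnd ℂ) (𝓕 h ξ)) x := key
      _ = ∫ x : ℝ, h x * (starRingEnd ℂ) (h x) := by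
          congr 1; funext x
          rw [smul_eq_mul, fourier_conj, Continuous.fourierInv_fourier_eq hc hi hFi]
  have l1 : ∀ g : ℝ → ℂ, (∫ ξ : ℝ, g ξ * (starRingEnd ℂ) (g ξ))
      = ((∫ ξ : ℝ, ‖g ξ‖ ^ 2 : ℝ) : ℂ) := by
    intro g
    have l0 : (∫ ξ : ℝ, g ξ * (starRingEnd ℂ) (g ξ))
        = ∫ ξ : ℝ, ((‖g ξ‖ ^ 2 : ℝ) : ℂ) := by
      congr 1; funext ξ
      rw [mul_comm, Complex.conj_mul']
      norm_cast
    rw [l0]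
    exact integral_ofReal (𝕜 := ℂ)
  rw [l1, l1] at keyr
  exact_mod_cast keyr

/-! ### Fourier transform computations -/

lemma F_smul (r : ℂ) (g : ℝ → ℂ) (ξ : ℝ) :
    𝓕 (fun x => r * g x) ξ = r * 𝓕 g ξ := by
  rw [Real.fourier_real_eq_integral_exp_smul,
    Real.fourier_real_eq_integral_exp_smul, ← integral_const_mul]
  congr 1; funext v; simp only [smul_eq_mul]; ring

lemma int_phase {g : ℝ → ℂ} (hg : Integrable g) (ξ : ℝ) :
    Integrable (fun v : ℝ => Complex.exp (↑(-2 * π * v * ξ) * Complex.I) * g v) :=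
  hg.bdd_mul ((Complex.continuous_exp.comp (by continuity)).aestronglyMeasurable)
    (ae_of_all _ fun v => (le_of_eq (by simp [Complex.norm_exp]) : _ ≤ (1:ℝ)))

lemma F_add {g h : ℝ → ℂ} (hg : Integrable g) (hh : Integrable h) (ξ : ℝ) :
    𝓕 (fun x => g x + h x) ξ = 𝓕 g ξ + 𝓕 h ξ := by
  rw [Real.fourier_real_eq_integral_exp_smul,
    Real.fourier_real_eq_integral_exp_smul,
    Real.fourier_real_eq_integral_exp_smul]
  simp only [smul_eq_mul, mul_add]
  exact integral_add (int_phase hg ξ) (int_phase hh ξ)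

lemma F_sub {g h : ℝ → ℂ} (hg : Integrable g) (hh : Integrable h) (ξ : ℝ) :
    𝓕 (fun x => g x - h x) ξ = 𝓕 g ξ - 𝓕 h ξ := by
  rw [Real.fourier_real_eq_integral_exp_smul,
    Real.fourier_real_eq_integral_exp_smul,
    Real.fourier_real_eq_integral_exp_smul]
  simp only [smul_eq_mul, mul_sub]
  exact integral_sub (int_phase hg ξ) (int_phase hh ξ)

lemma deriv_coe (w : SchwartzMap ℝ ℂ) : deriv ⇑w = ⇑(derivCLM ℂ ℂ w) :=
  funext fun x => (derivCLM_apply ℂ w x).symm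

lemma iteratedDeriv_schwartz (w : SchwartzMap ℝ ℂ) (n : ℕ) :
    ∃ w' : SchwartzMap ℝ ℂ, iteratedDeriv n ⇑w = ⇑w' := by
  induction n with
  | zero => exact ⟨w, by simp [iteratedDeriv_zero]⟩
  | succ n ih =>
    obtain ⟨w', hw'⟩ := ih
    exact ⟨derivCLM ℂ ℂ w', by rw [iteratedDeriv_succ, hw', deriv_coe]⟩

lemma int_pow_mul (w : SchwartzMap ℝ ℂ) (n : ℕ) :
    Integrable (fun x : ℝ => (x : ℂ) ^ n * w x) := by
  refine (w.integrable_pow_mul volume n).mono'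
    (((Complex.continuous_ofReal.pow n).mul w.continuous).aestronglyMeasurable)
    (Filter.Eventually.of_forall fun x => ?_)
  simp [abs_pow]

lemma int_pow_smul (w : SchwartzMap ℝ ℂ) (n : ℕ) :
    Integrable (fun x : ℝ => x ^ n • w x) := by
  have := int_pow_mul w n
  refine this.congr (Filter.Eventually.of_forall fun x => ?_)
  simp [Complex.real_smul]

/-- The Fourier transform of the second derivative. -/
lemma F_dd (u : SchwartzMap ℝ ℂ) :
    𝓕 (deriv (deriv ⇑u)) = fun ξ : ℝ => (2 * π * Complex.I * ξ) ^ 2 • 𝓕 ⇑u ξ := by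
  have h2 : deriv (deriv ⇑u) = iteratedDeriv 2 ⇑u := by
    rw [iteratedDeriv_succ, iteratedDeriv_one]
  rw [h2]
  exact Real.fourier_iteratedDeriv (N := (⊤ : ℕ∞)) (u.smooth ⊤)
    (fun n _ => by obtain ⟨w', hw'⟩ := iteratedDeriv_schwartz u n; rw [hw']; exact w'.integrable)
    le_top

/-- The second derivative of the Fourier transform. -/
lemma dd_F (u : SchwartzMap ℝ ℂ) :
    deriv (deriv (𝓕 ⇑u)) = 𝓕 (fun x : ℝ => (-2 * π * Complex.I * x) ^ 2 • u x) := by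
  have h2 : deriv (deriv (𝓕 ⇑u)) = iteratedDeriv 2 (𝓕 ⇑u) := by
    rw [iteratedDeriv_succ, iteratedDeriv_one]
  rw [h2]
  exact Real.iteratedDeriv_fourier (N := (⊤ : ℕ∞))
    (fun n _ => int_pow_smul u n) le_top

lemma dd_F' (u : SchwartzMap ℝ ℂ) :
    deriv (deriv (𝓕 ⇑u))
      = fun ξ : ℝ => (-4 * (π:ℂ)^2) * 𝓕 (fun x : ℝ => (x : ℂ) ^ 2 * u x) ξ := by
  have h1 : (fun x : ℝ => (-2 * π * Complex.I * x) ^ 2 • u x)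
      = fun x : ℝ => (-4 * (π:ℂ)^2) * ((x:ℂ)^2 * u x) := by
    funext x
    simp only [smul_eq_mul]
    ring_nf
    rw [Complex.I_sq]
    ring
  rw [dd_F, h1]
  funext ξ
  rw [F_smul]

lemma osc_int (c z : ℂ) (u : SchwartzMap ℝ ℂ) :
    Integrable (oscShifted c z ⇑u) := by
  have heq : oscShifted c z ⇑u = fun x =>
      ((-1 : ℂ) * (derivCLM ℂ ℂ (derivCLM ℂ ℂ u)) x + c * ((x:ℂ)^2 * u x)) - z * u x := by
    funext x
    simp only [oscShifted, ← deriv_coe]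
    ring
  rw [heq]
  exact ((((derivCLM ℂ ℂ (derivCLM ℂ ℂ u)).integrable.const_mul (-1)).add
    ((int_pow_mul u 2).const_mul c)).sub (u.integrable.const_mul z))

lemma osc_cont (c z : ℂ) (u : SchwartzMap ℝ ℂ) :
    Continuous (oscShifted c z ⇑u) := by
  have heq : oscShifted c z ⇑u = fun x =>
      (-( (derivCLM ℂ ℂ (derivCLM ℂ ℂ u)) x) + c * (x:ℂ)^2 * u x) - z * u x := by
    funext x
    simp only [oscShifted, ← deriv_coe]
  rw [heq]
  fun_prop

lemma fourier_osc (c z : ℂ) (u : SchwartzMap ℝ ℂ) (ξ : ℝ) :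
    𝓕 (oscShifted c z ⇑u) ξ
      = -((2 * π * Complex.I * ξ) ^ 2 * 𝓕 ⇑u ξ)
        + c * 𝓕 (fun x : ℝ => (x : ℂ) ^ 2 * u x) ξ
        - z * 𝓕 ⇑u ξ := by
  have heq : oscShifted c z ⇑u = fun x =>
      ((-1 : ℂ) * (derivCLM ℂ ℂ (derivCLM ℂ ℂ u)) x + c * ((x:ℂ)^2 * u x)) - z * u x := by
    funext x
    simp only [oscShifted, ← deriv_coe]
    ring
  rw [heq, F_sub (g := fun x => (-1 : ℂ) * (derivCLM ℂ ℂ (derivCLM ℂ ℂ u)) x + c * ((x:ℂ)^2 * u x))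
      (h := fun x => z * u x) (((derivCLM ℂ ℂ (derivCLM ℂ ℂ u)).integrable.const_mul (-1)).add
      ((int_pow_mul u 2).const_mul c)) (u.integrable.const_mul z),
    F_add (g := fun x => (-1 : ℂ) * (derivCLM ℂ ℂ (derivCLM ℂ ℂ u)) x)
      (h := fun x => c * ((x:ℂ)^2 * u x)) ((derivCLM ℂ ℂ (derivCLM ℂ ℂ u)).integrable.const_mul (-1))
      ((int_pow_mul u 2).const_mul c), F_smul, F_smul, F_smul]
  have hddc : ⇑(derivCLM ℂ ℂ (derivCLM ℂ ℂ u)) = deriv (deriv ⇑u) := by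
    rw [deriv_coe u, deriv_coe]
  rw [hddc, F_dd]
  simp only [smul_eq_mul]
  ring

lemma F_osc_int (c z : ℂ) (u : SchwartzMap ℝ ℂ) :
    Integrable (𝓕 (oscShifted c z ⇑u)) := by
  have heq : 𝓕 (oscShifted c z ⇑u) = fun ξ : ℝ =>
      ((-(2 * π * Complex.I)^2) * ((ξ:ℂ)^2 * (fourierTransformCLM ℂ u) ξ)
        + (c * (-4 * (π:ℂ)^2)⁻¹) * (derivCLM ℂ ℂ (derivCLM ℂ ℂ (fourierTransformCLM ℂ u))) ξ)
      - z * (fourierTransformCLM ℂ u) ξ := by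
    funext ξ
    rw [fourier_osc]
    have hFu : 𝓕 ⇑u = ⇑(fourierTransformCLM ℂ u) := rfl
    have hX : 𝓕 (fun x : ℝ => (x : ℂ) ^ 2 * u x) ξ
        = (-4 * (π:ℂ)^2)⁻¹ * deriv (deriv (𝓕 ⇑u)) ξ := by
      rw [dd_F' u, eq_inv_mul_iff_mul_eq₀ (by simp [Real.pi_ne_zero])]
    rw [hX, hFu, deriv_coe, deriv_coe]
    ring
  rw [heq]
  exact ((((int_pow_mul (fourierTransformCLM ℂ u) 2).const_mul _).add
    ((derivCLM ℂ ℂ (derivCLM ℂ ℂ (fourierTransformCLM ℂ u))).integrable.const_mul _)).sub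
    ((fourierTransformCLM ℂ u).integrable.const_mul z))

/-! ### Conjugation symmetry -/

lemma deriv_conjS (w : SchwartzMap ℝ ℂ) :
    deriv (fun x => (starRingEnd ℂ) (w x)) = fun x => (starRingEnd ℂ) (deriv ⇑w x) := by
  funext t
  exact (w.differentiableAt.hasDerivAt.star).deriv

lemma osc_conj (c z : ℂ) (f : SchwartzMap ℝ ℂ) (x : ℝ) :
    oscShifted (starRingEnd ℂ c) (starRingEnd ℂ z) ⇑(conjS f) x
      = (starRingEnd ℂ) (oscShifted c z ⇑f x) := by
  have h1 : deriv (deriv ⇑(conjS f)) = fun x => (starRingEnd ℂ) (deriv (deriv ⇑f) x) := by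
    have e1 : ⇑(conjS f) = fun x => (starRingEnd ℂ) (f x) := rfl
    rw [e1, deriv_conjS, deriv_coe]
    have e2 : (fun x => (starRingEnd ℂ) ((derivCLM ℂ ℂ f) x))
        = fun x => (starRingEnd ℂ) ((derivCLM ℂ ℂ f) x) := rfl
    rw [deriv_conjS (derivCLM ℂ ℂ f), ← deriv_coe]
  simp only [oscShifted, conjS_apply, h1]
  simp only [map_add, map_sub, map_neg, map_mul, map_pow, Complex.conj_ofReal]

/-! ### The dilation construction -/

noncomputable def dilA (c : ℂ) : ℝ := Real.sqrt (‖c‖) / (2 * π)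

lemma dilA_pos (c : ℂ) (hc : c ≠ 0) : 0 < dilA c := by
  apply div_pos (Real.sqrt_pos.2 ?_) (by positivity)
  simpa using hc

lemma dilA_sq (c : ℂ) (hc : c ≠ 0) : 4 * π ^ 2 * (dilA c) ^ 2 = ‖c‖ := by
  rw [dilA, div_pow, Real.sq_sqrt (norm_nonneg c)]
  rw [mul_pow]
  field_simp
  ring

noncomputable def gTrans (c : ℂ) (hc : c ≠ 0) (vS : SchwartzMap ℝ ℂ) : SchwartzMap ℝ ℂ :=
  ((Real.sqrt (dilA c) : ℂ)) •
    (compCLMOfContinuousLinearEquiv ℂ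
      (ContinuousLinearEquiv.unitsEquivAut ℝ (Units.mk0 (dilA c) (dilA_pos c hc).ne')) vS)

lemma gTrans_apply (c : ℂ) (hc : c ≠ 0) (vS : SchwartzMap ℝ ℂ) (x : ℝ) :
    gTrans c hc vS x = (Real.sqrt (dilA c) : ℂ) * vS (x * dilA c) := rfl

lemma deriv_dilate (w : SchwartzMap ℝ ℂ) (b : ℂ) (a : ℝ) :
    deriv (fun x : ℝ => b * w (x * a)) = fun x => b * a * deriv ⇑w (x * a) := by
  funext x
  have h1 : HasDerivAt (fun x : ℝ => w (x * a)) (a • deriv ⇑w (x * a)) x :=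
    HasDerivAt.scomp x (w.differentiableAt.hasDerivAt) (hasDerivAt_mul_const a)
  have h2 := (h1.const_mul b).deriv
  rw [h2, Complex.real_smul]
  ring

lemma deriv2_dilate (w : SchwartzMap ℝ ℂ) (b : ℂ) (a : ℝ) :
    deriv (deriv (fun x : ℝ => b * w (x * a)))
      = fun x => b * a * a * deriv (deriv ⇑w) (x * a) := by
  rw [deriv_dilate]
  have h1 : (fun x : ℝ => b * ↑a * deriv ⇑w (x * a))
      = fun x : ℝ => (b * ↑a) * (derivCLM ℂ ℂ w) (x * a) := by rw [deriv_coe]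
  rw [h1, deriv_dilate]
  funext x
  rw [← deriv_coe]

/-- The key pointwise identity. -/
lemma key_pointwise (c : ℂ) (hc : c ≠ 0) (u : SchwartzMap ℝ ℂ) (zz : ℂ) (x : ℝ) :
    oscShifted c (Complex.exp ((c.arg : ℂ) * Complex.I) * zz)
        (⇑(gTrans c hc (SchwartzMap.fourierTransformCLM ℂ u))) x
      = (Real.sqrt (dilA c) : ℂ) * (Complex.exp ((c.arg : ℂ) * Complex.I) *
          𝓕 (oscShifted (starRingEnd ℂ c) zz ⇑u) (x * dilA c)) := by
  set μ := Complex.exp ((c.arg : ℂ) * Complex.I) with hμdef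
  set a := dilA c with hadef
  set vS := SchwartzMap.fourierTransformCLM ℂ u with hvdef
  set sC := (Real.sqrt (dilA c) : ℂ) with hsdef
  have hgcoe : ⇑(gTrans c hc vS) = fun x : ℝ => sC * vS (x * a) :=
    funext fun x => gTrans_apply c hc vS x
  have hFu : 𝓕 ⇑u = ⇑vS := rfl
  have hA : (4 * (π:ℂ)^2 * (a:ℂ)^2) = ((‖c‖ : ℝ) : ℂ) := by
    have := dilA_sq c hc
    push_cast [← this]
    ring
  have hcμ : μ * ((‖c‖ : ℝ) : ℂ) = c := by
    rw [hμdef, mul_comm]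
    exact Complex.norm_mul_exp_arg_mul_I c
  have hμ1 : μ * (starRingEnd ℂ) μ = 1 := by
    rw [Complex.mul_conj, Complex.normSq_eq_norm_sq, hμdef, Complex.norm_exp_ofReal_mul_I]
    norm_num
  have hμc : μ * (starRingEnd ℂ) c = ((‖c‖ : ℝ) : ℂ) := by
    have h1 : (starRingEnd ℂ) c = ((‖c‖ : ℝ) : ℂ) * (starRingEnd ℂ) μ := by
      conv_lhs => rw [← hcμ]
      simp [mul_comm]
    rw [h1, ← mul_assoc, mul_comm μ, mul_assoc, hμ1, mul_one]
  rw [fourier_osc, hFu, hgcoe]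
  simp only [oscShifted]
  rw [deriv2_dilate]
  have hvdd : deriv (deriv ⇑vS) = fun ξ : ℝ =>
      (-4 * (π:ℂ)^2) * 𝓕 (fun x : ℝ => (x : ℂ) ^ 2 * u x) ξ := by
    rw [← hFu]; exact dd_F' u
  rw [hvdd]
  have e2 : c = μ * (4 * (π:ℂ)^2 * (a:ℂ)^2) := by rw [hA, hcμ]
  have e3 : (starRingEnd ℂ) c = (starRingEnd ℂ) μ * (4 * (π:ℂ)^2 * (a:ℂ)^2) := by
    rw [e2, map_mul]
    congr 1
    simp [map_mul, map_pow, Complex.conj_ofReal, map_ofNat]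
  set X := 𝓕 (fun x : ℝ => (x : ℂ) ^ 2 * u x) (x * a) with hX
  set V := vS (x * a) with hV
  rw [e3, e2]
  push_cast
  linear_combination (-(sC * 4 * (π:ℂ)^2 * (a:ℂ)^2 * X)) * hμ1
    + (sC * μ * 4 * (π:ℂ)^2 * (a:ℂ)^2 * (x:ℂ)^2 * V) * Complex.I_sq

/-! ### Integral identities -/

lemma norm_sq_dilate (F : ℝ → ℂ) {a : ℝ} (ha : 0 < a) :
    (∫ x : ℝ, ‖(Real.sqrt a : ℂ) * F (x * a)‖ ^ 2) = ∫ y : ℝ, ‖F y‖ ^ 2 := by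
  have h1 : ∀ x : ℝ, ‖(Real.sqrt a : ℂ) * F (x * a)‖ ^ 2 = a * ‖F (x * a)‖ ^ 2 := by
    intro x
    rw [norm_mul, mul_pow]
    congr 1
    rw [Complex.norm_real, Real.norm_eq_abs, _root_.abs_of_nonneg (Real.sqrt_nonneg a),
      Real.sq_sqrt ha.le]
  simp_rw [h1]
  rw [integral_const_mul, MeasureTheory.Measure.integral_comp_mul_right (fun y => ‖F y‖^2) a,
    smul_eq_mul, _root_.abs_of_nonneg (inv_nonneg.2 ha.le), ← mul_assoc, mul_inv_cancel₀ ha.ne',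
    one_mul]

lemma norm_one_of (f : SchwartzMap ℝ ℂ) (c : ℂ) (hc : c ≠ 0)
    (hf : (∫ x : ℝ, ‖f x‖ ^ 2 : ℝ) = 1) :
    (∫ x : ℝ, ‖gTrans c hc (SchwartzMap.fourierTransformCLM ℂ (conjS f)) x‖ ^ 2 : ℝ) = 1 := by
  set u := conjS f with hudef
  set vS := SchwartzMap.fourierTransformCLM ℂ u with hvdef
  have hgcoe : ∀ x : ℝ, gTrans c hc vS x = (Real.sqrt (dilA c) : ℂ) * vS (x * dilA c) :=
    gTrans_apply c hc vS
  have hFu : 𝓕 ⇑u = ⇑vS := rfl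
  calc (∫ x : ℝ, ‖gTrans c hc vS x‖ ^ 2 : ℝ)
      = ∫ x : ℝ, ‖(Real.sqrt (dilA c) : ℂ) * vS (x * dilA c)‖ ^ 2 := rfl
    _ = ∫ y : ℝ, ‖vS y‖ ^ 2 := norm_sq_dilate (⇑vS) (dilA_pos c hc)
    _ = ∫ y : ℝ, ‖𝓕 ⇑u y‖ ^ 2 := by rw [hFu]
    _ = ∫ y : ℝ, ‖u y‖ ^ 2 := by
        refine plancherel_aux u.continuous u.integrable ?_
        rw [hFu]; exact vS.integrable
    _ = ∫ y : ℝ, ‖f y‖ ^ 2 := by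
        congr 1; funext y
        rw [hudef]
        simp [conjS_apply, Complex.norm_conj]
    _ = 1 := hf

set_option maxHeartbeats 1000000 in
lemma osc_integral_eq (f : SchwartzMap ℝ ℂ) (c : ℂ) (hc : c ≠ 0) (z : ℂ) :
    (∫ x : ℝ, ‖oscShifted c (Complex.exp ((c.arg : ℂ) * Complex.I) * (starRingEnd ℂ z))
        (⇑(gTrans c hc (SchwartzMap.fourierTransformCLM ℂ (conjS f)))) x‖ ^ 2)
      = ∫ x : ℝ, ‖oscShifted c z ⇑f x‖ ^ 2 := by
  set u := conjS f with hudef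
  set μ := Complex.exp ((c.arg : ℂ) * Complex.I) with hμdef
  have hμabs : ‖μ‖ = 1 := Complex.norm_exp_ofReal_mul_I _
  set H := oscShifted (starRingEnd ℂ c) (starRingEnd ℂ z) ⇑u with hHdef
  have hpt : (fun x : ℝ => ‖oscShifted c (μ * (starRingEnd ℂ z))
        (⇑(gTrans c hc (SchwartzMap.fourierTransformCLM ℂ u))) x‖ ^ 2)
      = fun x : ℝ => ‖(Real.sqrt (dilA c) : ℂ) * ((fun y => μ * 𝓕 H y) (x * dilA c))‖ ^ 2 := by
    funext x
    rw [key_pointwise c hc u (starRingEnd ℂ z) x]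
  calc (∫ x : ℝ, ‖oscShifted c (μ * (starRingEnd ℂ z))
        (⇑(gTrans c hc (SchwartzMap.fourierTransformCLM ℂ u))) x‖ ^ 2)
      = ∫ x : ℝ, ‖(Real.sqrt (dilA c) : ℂ) * ((fun y => μ * 𝓕 H y) (x * dilA c))‖ ^ 2 := by
        rw [hpt]
    _ = ∫ y : ℝ, ‖μ * 𝓕 H y‖ ^ 2 := norm_sq_dilate (fun y => μ * 𝓕 H y) (dilA_pos c hc)
    _ = ∫ y : ℝ, ‖𝓕 H y‖ ^ 2 := by
        congr 1; funext y
        rw [norm_mul]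
        simp [hμabs]
    _ = ∫ y : ℝ, ‖H y‖ ^ 2 :=
        plancherel_aux (osc_cont _ _ u) (osc_int _ _ u) (F_osc_int _ _ u)
    _ = ∫ x : ℝ, ‖oscShifted c z ⇑f x‖ ^ 2 := by
        congr 1; funext x
        rw [hHdef, osc_conj]
        simp

/-- One inclusion between the two optimization sets. -/
lemma osc_set_subset (c : ℂ) (hc : c ≠ 0) (z : ℂ) :
    {r : ℝ | ∃ f : SchwartzMap ℝ ℂ, (∫ x : ℝ, ‖f x‖ ^ 2 : ℝ) = 1 ∧
        r = Real.sqrt (∫ x : ℝ, ‖oscShifted c z (f : ℝ → ℂ) x‖ ^ 2)} ⊆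
    {r : ℝ | ∃ f : SchwartzMap ℝ ℂ, (∫ x : ℝ, ‖f x‖ ^ 2 : ℝ) = 1 ∧
        r = Real.sqrt (∫ x : ℝ,
          ‖oscShifted c (Complex.exp ((c.arg : ℂ) * Complex.I) * (starRingEnd ℂ z))
            (f : ℝ → ℂ) x‖ ^ 2)} := by
  rintro r ⟨f, hf1, rfl⟩
  exact ⟨gTrans c hc (SchwartzMap.fourierTransformCLM ℂ (conjS f)),
    norm_one_of f c hc hf1, by rw [osc_integral_eq f c hc z]⟩

/-- For `Re c > 0`, `Im c > 0` and `θ = arg c`, the quantity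
`inf {‖H_c f - z f‖ : f ∈ 𝒮(ℝ), ‖f‖ = 1}` is invariant under the reflection
`z ↦ e^{iθ} conj z` in the axis `c^{1/2} ℝ`; hence the resolvent norm and the
pseudospectra of `H_c` are symmetric with respect to that axis. -/
theorem resolventNorm_symmetric (c : ℂ) (hre : 0 < c.re) (him : 0 < c.im) (z : ℂ) :
    sInf {r : ℝ | ∃ f : SchwartzMap ℝ ℂ, (∫ x : ℝ, ‖f x‖ ^ 2 : ℝ) = 1 ∧
        r = Real.sqrt (∫ x : ℝ, ‖oscShifted c z (f : ℝ → ℂ) x‖ ^ 2)} =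
    sInf {r : ℝ | ∃ f : SchwartzMap ℝ ℂ, (∫ x : ℝ, ‖f x‖ ^ 2 : ℝ) = 1 ∧
        r = Real.sqrt (∫ x : ℝ,
          ‖oscShifted c (Complex.exp ((c.arg : ℂ) * Complex.I) * (starRingEnd ℂ z))
            (f : ℝ → ℂ) x‖ ^ 2)} := by
  have hc : c ≠ 0 := by
    intro h
    rw [h] at hre
    simp at hre
  have h1 := osc_set_subset c hc z
  have h2 := osc_set_subset c hc (Complex.exp ((c.arg : ℂ) * Complex.I) * (starRingEnd ℂ z))
  have hμ1 : Complex.exp ((c.arg : ℂ) * Complex.I)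
      * (starRingEnd ℂ) (Complex.exp ((c.arg : ℂ) * Complex.I)) = 1 := by
    rw [Complex.mul_conj, Complex.normSq_eq_norm_sq, Complex.norm_exp_ofReal_mul_I]
    norm_num
  have hz : Complex.exp ((c.arg : ℂ) * Complex.I) *
      (starRingEnd ℂ) (Complex.exp ((c.arg : ℂ) * Complex.I) * (starRingEnd ℂ z)) = z := by
    rw [map_mul, Complex.conj_conj, ← mul_assoc, hμ1, one_mul]
  rw [hz] at h2
  rw [subset_antisymm h1 h2]
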